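/- Let H and I be finite nonempty types, and fix α : H × I → ℝ and γ : H → ℝ. Then the set of β ∈ (I × H → ℝ) for which there exist i, j ∈ I with (Σ_{h} γ(h)·β(j,h)) · (Σ_{h} α(h,i)·γ(h)·β(i,h)) = (Σ_{h} γ(h)·β(i,h)) · (Σ_{h} α(h,j)·γ(h)·β(j,h)) and Σ_{h} α(h,i)·γ(h) ≠ Σ_{h} α(h,j)·γ(h) has Lebesgue measure zero in ℝ^{|I|·|H|}. -/

import Mathlib

open MeasureTheory

lemma update_slice_null {ι : Type} [Fintype ι] [DecidableEq ι] (k : ι)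
    {s : Set (ι → ℝ)} (hs : MeasurableSet s)
    (h : ∀ z : ι → ℝ, volume {t : ℝ | Function.update z k t ∈ s} = 0) :
    volume s = 0 := by
  classical
  set p : ι → Prop := fun i => i ≠ k with hp
  let e := MeasurableEquiv.piEquivPiSubtypeProd (fun _ : ι => ℝ) p
  have hmp : MeasurePreserving e volume volume :=
    volume_preserving_piEquivPiSubtypeProd (fun _ : ι => ℝ) p
  have himg : (e : (ι → ℝ) → _) '' s = e.symm ⁻¹' s := Equiv.image_eq_preimage_symm _ _
  have hms : MeasurableSet ((e : (ι → ℝ) → _) '' s) := by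
    rw [himg]; exact e.symm.measurable hs
  have hvol : volume ((e : (ι → ℝ) → _) '' s) = volume s := by
    rw [himg]; exact (hmp.symm e).measure_preimage hs.nullMeasurableSet
  rw [← hvol]
  haveI : Unique {i // ¬ p i} :=
    ⟨⟨⟨k, by simp [hp]⟩⟩, fun a => Subtype.ext (not_not.mp a.2)⟩
  rw [show (volume : Measure (({i // p i} → ℝ) × ({i // ¬ p i} → ℝ))) = volume.prod volume from rfl]
  rw [Measure.measure_prod_null hms]
  refine Filter.Eventually.of_forall fun x => ?_
  set z : ι → ℝ := e.symm (x, fun _ => 0) with hz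
  have hslice : Prod.mk x ⁻¹' ((e : (ι → ℝ) → _) '' s)
      = (fun y : {i // ¬ p i} → ℝ => y default) ⁻¹' {t | Function.update z k t ∈ s} := by
    ext y
    simp only [Set.mem_preimage, himg, Set.mem_setOf_eq]
    have hkey : e.symm (x, y) = Function.update z k (y default) := by
      funext i
      by_cases hi : i = k
      · subst hi
        simp [z, e, MeasurableEquiv.piEquivPiSubtypeProd, Equiv.piEquivPiSubtypeProd,
          Function.update_self, hp]
        exact congrArg y (Subsingleton.elim _ _)
      · simp [z, e, MeasurableEquiv.piEquivPiSubtypeProd, Equiv.piEquivPiSubtypeProd,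
          Function.update_of_ne hi, hp, hi]
    rw [hkey]
  show volume (Prod.mk x ⁻¹' ((e : (ι → ℝ) → _) '' s)) = 0
  rw [hslice]
  have hA : MeasurableSet {t : ℝ | Function.update z k t ∈ s} :=
    (measurable_update z) hs
  have hmpu : MeasurePreserving (fun y : {i // ¬ p i} → ℝ => y default) volume volume :=
    volume_preserving_piUnique _
  rw [hmpu.measure_preimage hA.nullMeasurableSet]
  exact h z

lemma affine_root_null (c m : ℝ) : volume {t : ℝ | c * t + m = 0 ∧ c ≠ 0} = 0 := by
  apply measure_mono_null (t := {-m / c})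
  · rintro t ⟨ht, hc⟩
    have : t = -m / c := by field_simp; linarith
    simp [this]
  · exact Real.volume_singleton

lemma sum_if_split {H : Type} [Fintype H] [DecidableEq H] (f g : H → ℝ) (h0 : H) (s : ℝ) :
    ∑ h, f h * (if h = h0 then s else g h)
      = (∑ h ∈ Finset.univ.erase h0, f h * g h) + f h0 * s := by
  rw [← Finset.sum_erase_add _ _ (Finset.mem_univ h0)]
  simp only [if_pos rfl]
  congr 1
  exact Finset.sum_congr rfl fun x hx => by rw [if_neg (Finset.ne_of_mem_erase hx)]

theorem fixed_alpha_gamma_violation_measure_zero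
    (H I : Type) [Fintype H] [Fintype I] [Nonempty H] [Nonempty I]
    (α : H × I → ℝ) (γ : H → ℝ) :
    volume {β : I × H → ℝ |
      ∃ i j : I,
        (∑ h, γ h * β (j, h)) * (∑ h, α (h, i) * γ h * β (i, h)) =
          (∑ h, γ h * β (i, h)) * (∑ h, α (h, j) * γ h * β (j, h)) ∧
        ∑ h, α (h, i) * γ h ≠ ∑ h, α (h, j) * γ h} = 0 := by
  classical
  have hset : {β : I × H → ℝ |
      ∃ i j : I,
        (∑ h, γ h * β (j, h)) * (∑ h, α (h, i) * γ h * β (i, h)) =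
          (∑ h, γ h * β (i, h)) * (∑ h, α (h, j) * γ h * β (j, h)) ∧
        ∑ h, α (h, i) * γ h ≠ ∑ h, α (h, j) * γ h}
      = ⋃ i : I, ⋃ j : I, {β : I × H → ℝ |
        (∑ h, γ h * β (j, h)) * (∑ h, α (h, i) * γ h * β (i, h)) =
          (∑ h, γ h * β (i, h)) * (∑ h, α (h, j) * γ h * β (j, h)) ∧
        ∑ h, α (h, i) * γ h ≠ ∑ h, α (h, j) * γ h} := by
    ext β; simp [Set.mem_iUnion]
  rw [hset]
  refine measure_iUnion_null fun i => measure_iUnion_null fun j => ?_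
  by_cases hne : ∑ h, α (h, i) * γ h = ∑ h, α (h, j) * γ h
  · have : {β : I × H → ℝ |
        (∑ h, γ h * β (j, h)) * (∑ h, α (h, i) * γ h * β (i, h)) =
          (∑ h, γ h * β (i, h)) * (∑ h, α (h, j) * γ h * β (j, h)) ∧
        ∑ h, α (h, i) * γ h ≠ ∑ h, α (h, j) * γ h} ⊆ (∅ : Set (I × H → ℝ)) :=
      fun β hβ => absurd hne hβ.2
    exact measure_mono_null this measure_empty
  -- extract a witness coordinate
  have hex : ∃ h0 : H, α (h0, i) * γ h0 ≠ α (h0, j) * γ h0 := by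
    by_contra hc
    push_neg at hc
    exact hne (Finset.sum_congr rfl fun h _ => hc h)
  obtain ⟨h0, hh0⟩ := hex
  have hγ0 : γ h0 ≠ 0 := fun h => hh0 (by rw [h, mul_zero, mul_zero])
  have hα0 : α (h0, i) ≠ α (h0, j) := fun h => hh0 (by rw [h])
  have hij : i ≠ j := by rintro rfl; exact hne rfl
  -- the linear functional a
  set a : (I × H → ℝ) → ℝ := fun β =>
    (∑ h, γ h * β (j, h)) * (α (h0, i) * γ h0) - γ h0 * (∑ h, α (h, j) * γ h * β (j, h))
    with ha
  have ha_meas : Measurable a := by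
    apply Measurable.sub
    · exact (Finset.measurable_sum _ fun h _ =>
        (by fun_prop)).mul_const _
    · exact ((Finset.measurable_sum _ fun h _ =>
        (by fun_prop))).const_mul _
  set F : (I × H → ℝ) → ℝ := fun β =>
    (∑ h, γ h * β (j, h)) * (∑ h, α (h, i) * γ h * β (i, h)) -
      (∑ h, γ h * β (i, h)) * (∑ h, α (h, j) * γ h * β (j, h)) with hF
  have hF_meas : Measurable F := by
    apply Measurable.sub
    · exact (Finset.measurable_sum _ fun h _ =>
        (by fun_prop)).mul
        (Finset.measurable_sum _ fun h _ =>
        (by fun_prop))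
    · exact (Finset.measurable_sum _ fun h _ =>
        (by fun_prop)).mul
        (Finset.measurable_sum _ fun h _ =>
        (by fun_prop))
  have hsub : {β : I × H → ℝ |
        (∑ h, γ h * β (j, h)) * (∑ h, α (h, i) * γ h * β (i, h)) =
          (∑ h, γ h * β (i, h)) * (∑ h, α (h, j) * γ h * β (j, h)) ∧
        ∑ h, α (h, i) * γ h ≠ ∑ h, α (h, j) * γ h}
      ⊆ {β | a β = 0} ∪ {β | F β = 0 ∧ a β ≠ 0} := by
    intro β hβ
    by_cases haz : a β = 0
    · exact Or.inl haz
    · exact Or.inr ⟨by rw [hF]; simp only; rw [hβ.1]; ring, haz⟩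
  refine measure_mono_null hsub (measure_union_null ?_ ?_)
  · -- {a = 0} is null: slice along coordinate (j, h0)
    refine update_slice_null (j, h0)
      (measurableSet_eq_fun ha_meas measurable_const) fun z => ?_
    have hkey : ∀ t : ℝ, a (Function.update z (j, h0) t)
        = (γ h0 * γ h0 * (α (h0, i) - α (h0, j))) * t
          + ((∑ h ∈ Finset.univ.erase h0, γ h * z (j, h)) * (α (h0, i) * γ h0)
             - γ h0 * (∑ h ∈ Finset.univ.erase h0, α (h, j) * γ h * z (j, h))) := by
      intro t
      have hupd : ∀ h : H, Function.update z (j, h0) t (j, h)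
          = if h = h0 then t else z (j, h) := by
        intro h
        rw [Function.update_apply]
        simp [Prod.ext_iff]
      rw [ha]
      simp only [hupd]
      rw [sum_if_split γ (fun h => z (j, h)) h0 t,
        sum_if_split (fun h => α (h, j) * γ h) (fun h => z (j, h)) h0 t]
      ring
    have hsl : {t : ℝ | Function.update z (j, h0) t ∈ {β | a β = 0}}
        ⊆ {t : ℝ | (γ h0 * γ h0 * (α (h0, i) - α (h0, j))) * t
          + ((∑ h ∈ Finset.univ.erase h0, γ h * z (j, h)) * (α (h0, i) * γ h0)
             - γ h0 * (∑ h ∈ Finset.univ.erase h0, α (h, j) * γ h * z (j, h))) = 0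
          ∧ (γ h0 * γ h0 * (α (h0, i) - α (h0, j))) ≠ 0} := by
      intro t ht
      refine ⟨by rw [← hkey t]; exact ht, ?_⟩
      exact mul_ne_zero (mul_ne_zero hγ0 hγ0) (sub_ne_zero.mpr hα0)
    exact measure_mono_null hsl (affine_root_null _ _)
  · -- {F = 0, a ≠ 0} is null: slice along coordinate (i, h0)
    refine update_slice_null (i, h0)
      ((measurableSet_eq_fun hF_meas measurable_const).inter
        (measurableSet_eq_fun ha_meas measurable_const).compl) fun z => ?_
    have hja : ∀ t : ℝ, a (Function.update z (i, h0) t) = a z := by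
      intro t
      rw [ha]
      simp only
      congr 1
      · congr 1
        exact Finset.sum_congr rfl fun h _ => by
          rw [Function.update_of_ne (by simp [Prod.ext_iff, Ne.symm hij])]
      · congr 1
        exact Finset.sum_congr rfl fun h _ => by
          rw [Function.update_of_ne (by simp [Prod.ext_iff, Ne.symm hij])]
    have hkey : ∀ t : ℝ, F (Function.update z (i, h0) t)
        = (a z) * t
          + ((∑ h, γ h * z (j, h)) * (∑ h ∈ Finset.univ.erase h0, α (h, i) * γ h * z (i, h))
             - (∑ h ∈ Finset.univ.erase h0, γ h * z (i, h)) * (∑ h, α (h, j) * γ h * z (j, h))) := by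
      intro t
      have hupdi : ∀ h : H, Function.update z (i, h0) t (i, h)
          = if h = h0 then t else z (i, h) := by
        intro h
        rw [Function.update_apply]
        simp [Prod.ext_iff]
      have hupdj : ∀ h : H, Function.update z (i, h0) t (j, h) = z (j, h) := by
        intro h
        rw [Function.update_of_ne (by simp [Prod.ext_iff, Ne.symm hij])]
      rw [hF, ha]
      simp only [hupdi, hupdj]
      rw [sum_if_split γ (fun h => z (i, h)) h0 t,
        sum_if_split (fun h => α (h, i) * γ h) (fun h => z (i, h)) h0 t]
      ring
    have hsl : {t : ℝ | Function.update z (i, h0) t ∈ {β | F β = 0 ∧ a β ≠ 0}}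
        ⊆ {t : ℝ | (a z) * t
          + ((∑ h, γ h * z (j, h)) * (∑ h ∈ Finset.univ.erase h0, α (h, i) * γ h * z (i, h))
             - (∑ h ∈ Finset.univ.erase h0, γ h * z (i, h)) * (∑ h, α (h, j) * γ h * z (j, h))) = 0
          ∧ a z ≠ 0} := by
      intro t ht
      obtain ⟨ht1, ht2⟩ := ht
      refine ⟨by rw [← hkey t]; exact ht1, ?_⟩
      rw [← hja t]; exact ht2
    exact measure_mono_null hsl (affine_root_null _ _)
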